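/- arXiv:0802.2574 — 9 statements merged into one kernel-verified Lean document; each statement's English description precedes it below -/
import Mathlib

section
/- Let β ⊆ α₁ ∩ α₂. Then for any set function h, J(h; α₁, α₂, α₃, α₄) = J(h; α₁, α₂, α₃∪β, α₄∪β) + h(β | α₃∪α₄), where h(β|δ) := h(β∪δ) − h(δ). -/
def IngJ {N : Type*} [DecidableEq N] (h : Finset N → ℝ) (a b c d : Finset N) : ℝ :=
  h (a ∪ b) + h (a ∪ c) + h (a ∪ d) + h (b ∪ c) + h (b ∪ d)
    - h a - h b - h (c ∪ d) - h (a ∪ b ∪ c) - h (a ∪ b ∪ d)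

theorem ingleton_add_to_34 {N : Type*} [DecidableEq N] [Fintype N]
    (h : Finset N → ℝ) (h0 : h ∅ = 0) (a1 a2 a3 a4 b : Finset N)
    (hb : b ⊆ a1 ∩ a2) :
    IngJ h a1 a2 a3 a4 = IngJ h a1 a2 (a3 ∪ b) (a4 ∪ b) + (h (b ∪ (a3 ∪ a4)) - h (a3 ∪ a4)) := by
  have hb1 : b ⊆ a1 := hb.trans Finset.inter_subset_left
  have hb2 : b ⊆ a2 := hb.trans Finset.inter_subset_right
  have e1 : ∀ x : Finset N, b ⊆ x → ∀ y, x ∪ (y ∪ b) = x ∪ y := by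
    intro x hx y
    rw [Finset.union_comm y b, ← Finset.union_assoc, Finset.union_eq_left.mpr hx]
  have e2 : (a3 ∪ b) ∪ (a4 ∪ b) = b ∪ (a3 ∪ a4) := by
    ext x; simp [Finset.mem_union]; tauto
  simp only [IngJ, e1 a1 hb1, e1 a2 hb2,
    e1 (a1 ∪ a2) (hb1.trans Finset.subset_union_left), e2]
  ring
end

section
/- Let β ⊆ α₁ ∩ α₃. Then for any set function h, J(h; α₁, α₂, α₃, α₄) = J(h; α₁, α₂∪β, α₃, α₄∪β) + I_h(β; α₄ | α₂), where I_h(β;α₄|α₂) := h(β∪α₂) + h(α₄∪α₂) − h(α₂) − h(β∪α₄∪α₂). -/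
theorem ingleton_add_to_24 {N : Type*} [DecidableEq N] [Fintype N]
    (h : Finset N → ℝ) (h0 : h ∅ = 0) (a1 a2 a3 a4 b : Finset N)
    (hb : b ⊆ a1 ∩ a3) :
    IngJ h a1 a2 a3 a4 = IngJ h a1 (a2 ∪ b) a3 (a4 ∪ b)
      + (h (b ∪ a2) + h (a4 ∪ a2) - h a2 - h (b ∪ a4 ∪ a2)) := by
  have h1 : b ⊆ a1 := hb.trans Finset.inter_subset_left
  have h3 : b ⊆ a3 := hb.trans Finset.inter_subset_right
  have m1 : ∀ x, x ∈ b → x ∈ a1 := fun x hx => h1 hx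
  have m3 : ∀ x, x ∈ b → x ∈ a3 := fun x hx => h3 hx
  have e1 : a1 ∪ (a2 ∪ b) = a1 ∪ a2 := by
    ext x; simp only [Finset.mem_union]; constructor
    · rintro (h | h | h) <;> [exact Or.inl h; exact Or.inr h; exact Or.inl (m1 x h)]
    · tauto
  have e2 : a1 ∪ (a4 ∪ b) = a1 ∪ a4 := by
    ext x; simp only [Finset.mem_union]; constructor
    · rintro (h | h | h) <;> [exact Or.inl h; exact Or.inr h; exact Or.inl (m1 x h)]
    · tauto
  have e3 : a2 ∪ b ∪ a3 = a2 ∪ a3 := by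
    ext x; simp only [Finset.mem_union]; constructor
    · rintro ((h | h) | h) <;> [exact Or.inl h; exact Or.inr (m3 x h); exact Or.inr h]
    · tauto
  have e4 : a2 ∪ b ∪ (a4 ∪ b) = b ∪ a4 ∪ a2 := by
    ext x; simp only [Finset.mem_union]; tauto
  have e5 : a1 ∪ (a2 ∪ b) ∪ a3 = a1 ∪ a2 ∪ a3 := by
    ext x; simp only [Finset.mem_union]; constructor
    · rintro ((h | h | h) | h) <;> [tauto; tauto; exact Or.inl (Or.inl (m1 x h)); tauto]
    · tauto
  have e6 : a1 ∪ (a2 ∪ b) ∪ (a4 ∪ b) = a1 ∪ a2 ∪ a4 := by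
    ext x; simp only [Finset.mem_union]; constructor
    · rintro ((h | h | h) | h | h) <;>
        [tauto; tauto; exact Or.inl (Or.inl (m1 x h)); tauto; exact Or.inl (Or.inl (m1 x h))]
    · tauto
  have e7 : a3 ∪ (a4 ∪ b) = a3 ∪ a4 := by
    ext x; simp only [Finset.mem_union]; constructor
    · rintro (h | h | h) <;> [exact Or.inl h; exact Or.inr h; exact Or.inl (m3 x h)]
    · tauto
  have e8 : b ∪ a2 = a2 ∪ b := Finset.union_comm _ _
  have e9 : a4 ∪ a2 = a2 ∪ a4 := Finset.union_comm _ _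
  have e10 : a1 ∪ a2 ∪ (a4 ∪ b) = a1 ∪ a2 ∪ a4 := by
    ext x; simp only [Finset.mem_union]; constructor
    · rintro ((h | h) | h | h) <;> [tauto; tauto; tauto; exact Or.inl (Or.inl (m1 x h))]
    · tauto
  simp only [IngJ, e1, e2, e3, e4, e5, e6, e7, e8, e9, e10]
  ring
end

section
/- Let β ⊆ α₃ ∩ α₄. Then for any set function h, J(h; α₁, α₂, α₃, α₄) = J(h; α₁∪β, α₂∪β, α₃, α₄) + I_h(β; α₂ | α₁) + h(β | α₂), where I_h(β;α₂|α₁) := h(β∪α₁) + h(α₂∪α₁) − h(α₁) − h(β∪α₂∪α₁) and h(β|α₂) := h(β∪α₂) − h(α₂). -/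
theorem ingleton_add_to_12 {N : Type*} [DecidableEq N] [Fintype N]
    (h : Finset N → ℝ) (h0 : h ∅ = 0) (a1 a2 a3 a4 b : Finset N)
    (hb : b ⊆ a3 ∩ a4) :
    IngJ h a1 a2 a3 a4 = IngJ h (a1 ∪ b) (a2 ∪ b) a3 a4
      + (h (b ∪ a1) + h (a2 ∪ a1) - h a1 - h (b ∪ a2 ∪ a1))
      + (h (b ∪ a2) - h a2) := by
  have hb3 : b ⊆ a3 := hb.trans Finset.inter_subset_left
  have hb4 : b ⊆ a4 := hb.trans Finset.inter_subset_right
  have e1 : (a1 ∪ b) ∪ (a2 ∪ b) = b ∪ a2 ∪ a1 := by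
    ext x; simp only [Finset.mem_union]; tauto
  have e2 : (a1 ∪ b) ∪ a3 = a1 ∪ a3 := by
    ext x; simp only [Finset.mem_union]; have := @hb3 x; tauto
  have e3 : (a1 ∪ b) ∪ a4 = a1 ∪ a4 := by
    ext x; simp only [Finset.mem_union]; have := @hb4 x; tauto
  have e4 : (a2 ∪ b) ∪ a3 = a2 ∪ a3 := by
    ext x; simp only [Finset.mem_union]; have := @hb3 x; tauto
  have e5 : (a2 ∪ b) ∪ a4 = a2 ∪ a4 := by
    ext x; simp only [Finset.mem_union]; have := @hb4 x; tauto
  have e6 : (a1 ∪ b) ∪ (a2 ∪ b) ∪ a3 = a1 ∪ a2 ∪ a3 := by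
    ext x; simp only [Finset.mem_union]; have := @hb3 x; tauto
  have e7 : (a1 ∪ b) ∪ (a2 ∪ b) ∪ a4 = a1 ∪ a2 ∪ a4 := by
    ext x; simp only [Finset.mem_union]; have := @hb4 x; tauto
  have e8 : b ∪ a1 = a1 ∪ b := Finset.union_comm _ _
  have e9 : a2 ∪ a1 = a1 ∪ a2 := Finset.union_comm _ _
  have e10 : b ∪ a2 = a2 ∪ b := Finset.union_comm _ _
  have e11 : a2 ∪ b ∪ a1 ∪ a3 = a1 ∪ a2 ∪ a3 := by
    ext x; simp only [Finset.mem_union]; have := @hb3 x; tauto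
  have e12 : a2 ∪ b ∪ a1 ∪ a4 = a1 ∪ a2 ∪ a4 := by
    ext x; simp only [Finset.mem_union]; have := @hb4 x; tauto
  simp only [IngJ, e1, e2, e3, e4, e5, e6, e7, e8, e9, e10, e11, e12]
  ring
end

section
/- Let a ⊆ α₁, b ⊆ α₂, c ⊆ α₃. Then for any set function h, J(h; α₁, α₂, α₃, a∪b∪c) = I_h(α₂; c | α₁∪b) + I_h(α₃; b | α₁) + I_h(α₃; a | α₂∪c) + I_h(α₁; α₂ | α₃∪a∪b) + h(c | α₂). -/
set_option maxHeartbeats 1000000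


theorem ingleton_fourth_in_union {N : Type*} [DecidableEq N] [Fintype N]
    (h : Finset N → ℝ) (h0 : h ∅ = 0) (a1 a2 a3 a b c : Finset N)
    (ha : a ⊆ a1) (hb : b ⊆ a2) (hc : c ⊆ a3) :
    IngJ h a1 a2 a3 (a ∪ b ∪ c) =
      (h (a2 ∪ (a1 ∪ b)) + h (c ∪ (a1 ∪ b)) - h (a1 ∪ b) - h (a2 ∪ c ∪ (a1 ∪ b)))
      + (h (a3 ∪ a1) + h (b ∪ a1) - h a1 - h (a3 ∪ b ∪ a1))
      + (h (a3 ∪ (a2 ∪ c)) + h (a ∪ (a2 ∪ c)) - h (a2 ∪ c) - h (a3 ∪ a ∪ (a2 ∪ c)))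
      + (h (a1 ∪ (a3 ∪ a ∪ b)) + h (a2 ∪ (a3 ∪ a ∪ b)) - h (a3 ∪ a ∪ b) - h (a1 ∪ a2 ∪ (a3 ∪ a ∪ b)))
      + (h (c ∪ a2) - h a2) := by
  have e1 : a1 ∪ a2 = a2 ∪ (a1 ∪ b) := by
    ext x; have := @ha x; have := @hb x; have := @hc x
    simp only [Finset.mem_union]; tauto
  have e2 : a1 ∪ a3 = a3 ∪ a1 := by
    ext x; simp only [Finset.mem_union]; tauto
  have e3 : a1 ∪ (a ∪ b ∪ c) = c ∪ (a1 ∪ b) := by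
    ext x; have := @ha x; have := @hb x; have := @hc x
    simp only [Finset.mem_union]; tauto
  have e4 : a2 ∪ a3 = a3 ∪ (a2 ∪ c) := by
    ext x; have := @ha x; have := @hb x; have := @hc x
    simp only [Finset.mem_union]; tauto
  have e5 : a2 ∪ (a ∪ b ∪ c) = a ∪ (a2 ∪ c) := by
    ext x; have := @ha x; have := @hb x; have := @hc x
    simp only [Finset.mem_union]; tauto
  have e6 : a3 ∪ (a ∪ b ∪ c) = a3 ∪ a ∪ b := by
    ext x; have := @ha x; have := @hb x; have := @hc x
    simp only [Finset.mem_union]; tauto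
  have e7 : a1 ∪ a2 ∪ a3 = a1 ∪ a2 ∪ (a3 ∪ a ∪ b) := by
    ext x; have := @ha x; have := @hb x; have := @hc x
    simp only [Finset.mem_union]; tauto
  have e8 : a1 ∪ a2 ∪ (a ∪ b ∪ c) = a2 ∪ c ∪ (a1 ∪ b) := by
    ext x; have := @ha x; have := @hb x; have := @hc x
    simp only [Finset.mem_union]; tauto
  have e9 : b ∪ a1 = a1 ∪ b := by
    ext x; simp only [Finset.mem_union]; tauto
  have e10 : a1 ∪ (a3 ∪ a ∪ b) = a3 ∪ b ∪ a1 := by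
    ext x; have := @ha x; simp only [Finset.mem_union]; tauto
  have e11 : c ∪ a2 = a2 ∪ c := by
    ext x; simp only [Finset.mem_union]; tauto
  have e12 : a2 ∪ (a3 ∪ a ∪ b) = a3 ∪ a ∪ (a2 ∪ c) := by
    ext x; have := @hb x; have := @hc x; simp only [Finset.mem_union]; tauto
  rw [IngJ, e7, e8, e1, e2, e3, e4, e5, e6, e9, e10, e11, e12]
  ring
end

section
/- If h is a polymatroid (normalized, monotone, submodular set function) and one of the four subsets α₁, α₂, α₃, α₄ is contained in the union of the other three, then the Ingleton inequality holds: J(h; α₁, α₂, α₃, α₄) ≥ 0. -/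
private lemma IngJ_comm12 {N : Type*} [DecidableEq N] (h : Finset N → ℝ) (a b c d : Finset N) :
    IngJ h a b c d = IngJ h b a c d := by
  simp only [IngJ]
  rw [Finset.union_comm b a]
  ring

private lemma IngJ_comm34 {N : Type*} [DecidableEq N] (h : Finset N → ℝ) (a b c d : Finset N) :
    IngJ h a b c d = IngJ h a b d c := by
  simp only [IngJ]
  rw [Finset.union_comm d c]
  ring

/-- Case: a3 ⊆ a1 ∪ a2 ∪ a4. -/
private lemma ingleton_case3 {N : Type*} [DecidableEq N]
    (h : Finset N → ℝ)
    (hmono : ∀ ⦃s t : Finset N⦄, s ⊆ t → h s ≤ h t)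
    (hsub : ∀ s t : Finset N, h (s ∪ t) + h (s ∩ t) ≤ h s + h t)
    (a1 a2 a3 a4 : Finset N) (hc : a3 ⊆ a1 ∪ a2 ∪ a4) :
    0 ≤ IngJ h a1 a2 a3 a4 := by
  have m1 : h a1 ≤ h (a1 ∪ (a2 ∩ a3 ∩ a4)) := hmono Finset.subset_union_left
  have m2 : h a2 ≤ h (a2 ∪ (a1 ∩ a3 ∩ a4)) := hmono Finset.subset_union_left
  have m3 : h (a1 ∪ (a2 ∩ a3)) ≤ h (a1 ∪ a3) := by
    apply hmono
    intro x hx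
    simp only [Finset.mem_union, Finset.mem_inter] at *
    tauto
  have m4 : h (a3 ∪ a4) ≤ h ((a1 ∩ a2) ∪ (a3 ∪ a4)) := hmono Finset.subset_union_right
  have s1 := hsub (a1 ∪ (a2 ∩ a3)) (a1 ∪ a4)
  have e1 : (a1 ∪ (a2 ∩ a3)) ∪ (a1 ∪ a4) = a1 ∪ a3 ∪ a4 := by
    ext x
    have hx := @hc x
    simp only [Finset.mem_union, Finset.mem_inter] at *
    tauto
  have e2 : (a1 ∪ (a2 ∩ a3)) ∩ (a1 ∪ a4) = a1 ∪ (a2 ∩ a3 ∩ a4) := by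
    ext x
    simp only [Finset.mem_union, Finset.mem_inter] at *
    tauto
  rw [e1, e2] at s1
  have s2 := hsub ((a1 ∩ a3) ∪ a2) (a2 ∪ a4)
  have e3 : ((a1 ∩ a3) ∪ a2) ∪ (a2 ∪ a4) = (a1 ∩ a3) ∪ (a2 ∪ a4) := by
    ext x
    simp only [Finset.mem_union, Finset.mem_inter] at *
    tauto
  have e4 : ((a1 ∩ a3) ∪ a2) ∩ (a2 ∪ a4) = a2 ∪ (a1 ∩ a3 ∩ a4) := by
    ext x
    simp only [Finset.mem_union, Finset.mem_inter] at *
    tauto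
  rw [e3, e4] at s2
  have s3 := hsub (a1 ∪ a2) (a2 ∪ a3)
  have e5 : (a1 ∪ a2) ∪ (a2 ∪ a3) = a1 ∪ a2 ∪ a3 := by
    ext x
    simp only [Finset.mem_union] at *
    tauto
  have e6 : (a1 ∪ a2) ∩ (a2 ∪ a3) = (a1 ∩ a3) ∪ a2 := by
    ext x
    simp only [Finset.mem_union, Finset.mem_inter] at *
    tauto
  rw [e5, e6] at s3
  have s4 := hsub (a1 ∪ a3 ∪ a4) ((a1 ∩ a3) ∪ (a2 ∪ a4))
  have e7 : (a1 ∪ a3 ∪ a4) ∪ ((a1 ∩ a3) ∪ (a2 ∪ a4)) = a1 ∪ a2 ∪ a4 := by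
    ext x
    have hx := @hc x
    simp only [Finset.mem_union, Finset.mem_inter] at *
    tauto
  have e8 : (a1 ∪ a3 ∪ a4) ∩ ((a1 ∩ a3) ∪ (a2 ∪ a4)) = (a1 ∩ a2) ∪ (a3 ∪ a4) := by
    ext x
    have hx := @hc x
    simp only [Finset.mem_union, Finset.mem_inter] at *
    tauto
  rw [e7, e8] at s4
  simp only [IngJ]
  linarith

/-- Case: a1 ⊆ a2 ∪ a3 ∪ a4. -/
private lemma ingleton_case1 {N : Type*} [DecidableEq N]
    (h : Finset N → ℝ)
    (hmono : ∀ ⦃s t : Finset N⦄, s ⊆ t → h s ≤ h t)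
    (hsub : ∀ s t : Finset N, h (s ∪ t) + h (s ∩ t) ≤ h s + h t)
    (a1 a2 a3 a4 : Finset N) (hc : a1 ⊆ a2 ∪ a3 ∪ a4) :
    0 ≤ IngJ h a1 a2 a3 a4 := by
  have m1 : h a1 ≤ h (a1 ∪ (a2 ∩ a3 ∩ a4)) := hmono Finset.subset_union_left
  have m2 : h a2 ≤ h (a2 ∪ (a1 ∩ a3 ∩ a4)) := hmono Finset.subset_union_left
  have m3 : h ((a1 ∩ a3) ∪ a2) ≤ h (a2 ∪ (a3 ∩ (a1 ∪ a4))) := by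
    apply hmono
    intro x hx
    simp only [Finset.mem_union, Finset.mem_inter] at *
    tauto
  have m4 : h (a3 ∪ a4) ≤ h ((a1 ∩ a2) ∪ (a3 ∪ a4)) := hmono Finset.subset_union_right
  have s1 := hsub (a1 ∪ (a2 ∩ a3)) (a1 ∪ a4)
  have e1 : (a1 ∪ (a2 ∩ a3)) ∪ (a1 ∪ a4) = (a2 ∩ a3) ∪ (a1 ∪ a4) := by
    ext x
    simp only [Finset.mem_union, Finset.mem_inter] at *
    tauto
  have e2 : (a1 ∪ (a2 ∩ a3)) ∩ (a1 ∪ a4) = a1 ∪ (a2 ∩ a3 ∩ a4) := by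
    ext x
    simp only [Finset.mem_union, Finset.mem_inter] at *
    tauto
  rw [e1, e2] at s1
  have s2 := hsub ((a1 ∩ a3) ∪ a2) (a2 ∪ a4)
  have e3 : ((a1 ∩ a3) ∪ a2) ∪ (a2 ∪ a4) = a1 ∪ a2 ∪ a4 := by
    ext x
    have hx := @hc x
    simp only [Finset.mem_union, Finset.mem_inter] at *
    tauto
  have e4 : ((a1 ∩ a3) ∪ a2) ∩ (a2 ∪ a4) = a2 ∪ (a1 ∩ a3 ∩ a4) := by
    ext x
    simp only [Finset.mem_union, Finset.mem_inter] at *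
    tauto
  rw [e3, e4] at s2
  have s3 := hsub (a1 ∪ a2) (a1 ∪ (a3 ∩ (a2 ∪ a4)))
  have e5 : (a1 ∪ a2) ∪ (a1 ∪ (a3 ∩ (a2 ∪ a4))) = (a3 ∩ a4) ∪ (a1 ∪ a2) := by
    ext x
    simp only [Finset.mem_union, Finset.mem_inter] at *
    tauto
  have e6 : (a1 ∪ a2) ∩ (a1 ∪ (a3 ∩ (a2 ∪ a4))) = a1 ∪ (a2 ∩ a3) := by
    ext x
    simp only [Finset.mem_union, Finset.mem_inter] at *
    tauto
  rw [e5, e6] at s3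
  have s4 := hsub (a1 ∪ a3) ((a2 ∩ a3) ∪ (a1 ∪ a4))
  have e7 : (a1 ∪ a3) ∪ ((a2 ∩ a3) ∪ (a1 ∪ a4)) = (a1 ∩ a2) ∪ (a3 ∪ a4) := by
    ext x
    have hx := @hc x
    simp only [Finset.mem_union, Finset.mem_inter] at *
    tauto
  have e8 : (a1 ∪ a3) ∩ ((a2 ∩ a3) ∪ (a1 ∪ a4)) = a1 ∪ (a3 ∩ (a2 ∪ a4)) := by
    ext x
    simp only [Finset.mem_union, Finset.mem_inter] at *
    tauto
  rw [e7, e8] at s4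
  have s5 := hsub (a2 ∪ a3) ((a3 ∩ a4) ∪ (a1 ∪ a2))
  have e9 : (a2 ∪ a3) ∪ ((a3 ∩ a4) ∪ (a1 ∪ a2)) = a1 ∪ a2 ∪ a3 := by
    ext x
    simp only [Finset.mem_union, Finset.mem_inter] at *
    tauto
  have e10 : (a2 ∪ a3) ∩ ((a3 ∩ a4) ∪ (a1 ∪ a2)) = a2 ∪ (a3 ∩ (a1 ∪ a4)) := by
    ext x
    simp only [Finset.mem_union, Finset.mem_inter] at *
    tauto
  rw [e9, e10] at s5
  simp only [IngJ]
  linarith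

theorem ingleton_of_polymatroid_containment {N : Type*} [DecidableEq N] [Fintype N]
    (h : Finset N → ℝ) (h0 : h ∅ = 0)
    (hmono : ∀ ⦃s t : Finset N⦄, s ⊆ t → h s ≤ h t)
    (hsub : ∀ s t : Finset N, h (s ∪ t) + h (s ∩ t) ≤ h s + h t)
    (a1 a2 a3 a4 : Finset N)
    (hcon : a1 ⊆ a2 ∪ a3 ∪ a4 ∨ a2 ⊆ a1 ∪ a3 ∪ a4 ∨ a3 ⊆ a1 ∪ a2 ∪ a4 ∨ a4 ⊆ a1 ∪ a2 ∪ a3) :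
    0 ≤ IngJ h a1 a2 a3 a4 := by
  rcases hcon with hc | hc | hc | hc
  · exact ingleton_case1 h hmono hsub a1 a2 a3 a4 hc
  · rw [IngJ_comm12]
    exact ingleton_case1 h hmono hsub a2 a1 a3 a4 hc
  · exact ingleton_case3 h hmono hsub a1 a2 a3 a4 hc
  · rw [IngJ_comm34]
    exact ingleton_case3 h hmono hsub a1 a2 a4 a3 hc
end

section
/- For any polymatroid h and any subsets α₁, α₂, α₃, α₄ of N, defining δᵢ := αᵢ \ ⋃_{j≠i} αⱼ and β := ⋃ᵢ (αᵢ \ δᵢ), we have J(h; α₁, α₂, α₃, α₄) ≥ J(h; δ₁∪β, δ₂∪β, δ₃∪β, δ₄∪β). -/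
private lemma dimret {N : Type*} [DecidableEq N] (h : Finset N → ℝ)
    (hmono : ∀ ⦃s t : Finset N⦄, s ⊆ t → h s ≤ h t)
    (hsub : ∀ s t : Finset N, h (s ∪ t) + h (s ∩ t) ≤ h s + h t)
    {X Y : Finset N} (S : Finset N) (hYX : Y ⊆ X) :
    h (X ∪ S) + h Y ≤ h X + h (Y ∪ S) := by
  have h1 : X ∪ (Y ∪ S) = X ∪ S := by
    rw [← Finset.union_assoc, Finset.union_eq_left.mpr hYX]
  have h2 : Y ⊆ X ∩ (Y ∪ S) :=
    Finset.subset_inter hYX Finset.subset_union_left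
  have := hsub X (Y ∪ S)
  rw [h1] at this
  have := hmono h2
  linarith

theorem ingleton_reduce_to_canonical {N : Type*} [DecidableEq N] [Fintype N]
    (h : Finset N → ℝ) (h0 : h ∅ = 0)
    (hmono : ∀ ⦃s t : Finset N⦄, s ⊆ t → h s ≤ h t)
    (hsub : ∀ s t : Finset N, h (s ∪ t) + h (s ∩ t) ≤ h s + h t)
    (a1 a2 a3 a4 : Finset N) :
    let d1 := a1 \ (a2 ∪ a3 ∪ a4)
    let d2 := a2 \ (a1 ∪ a3 ∪ a4)
    let d3 := a3 \ (a1 ∪ a2 ∪ a4)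
    let d4 := a4 \ (a1 ∪ a2 ∪ a3)
    let b := (a1 \ d1) ∪ (a2 \ d2) ∪ (a3 \ d3) ∪ (a4 \ d4)
    IngJ h (d1 ∪ b) (d2 ∪ b) (d3 ∪ b) (d4 ∪ b) ≤ IngJ h a1 a2 a3 a4 := by
  intro d1 d2 d3 d4 b
  have e12 : (d1 ∪ b) ∪ (d2 ∪ b) = a1 ∪ a2 ∪ a3 ∩ a4 := by
    ext x
    simp only [d1, d2, d3, d4, b, Finset.mem_union, Finset.mem_sdiff, Finset.mem_inter]
    by_cases h1 : x ∈ a1 <;> by_cases h2 : x ∈ a2 <;> by_cases h3 : x ∈ a3 <;>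
      by_cases h4 : x ∈ a4 <;> simp [h1, h2, h3, h4]
  have e13 : (d1 ∪ b) ∪ (d3 ∪ b) = a1 ∪ a3 ∪ a2 ∩ a4 := by
    ext x
    simp only [d1, d2, d3, d4, b, Finset.mem_union, Finset.mem_sdiff, Finset.mem_inter]
    by_cases h1 : x ∈ a1 <;> by_cases h2 : x ∈ a2 <;> by_cases h3 : x ∈ a3 <;>
      by_cases h4 : x ∈ a4 <;> simp [h1, h2, h3, h4]
  have e14 : (d1 ∪ b) ∪ (d4 ∪ b) = a1 ∪ a4 ∪ a2 ∩ a3 := by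
    ext x
    simp only [d1, d2, d3, d4, b, Finset.mem_union, Finset.mem_sdiff, Finset.mem_inter]
    by_cases h1 : x ∈ a1 <;> by_cases h2 : x ∈ a2 <;> by_cases h3 : x ∈ a3 <;>
      by_cases h4 : x ∈ a4 <;> simp [h1, h2, h3, h4]
  have e23 : (d2 ∪ b) ∪ (d3 ∪ b) = a2 ∪ a3 ∪ a1 ∩ a4 := by
    ext x
    simp only [d1, d2, d3, d4, b, Finset.mem_union, Finset.mem_sdiff, Finset.mem_inter]
    by_cases h1 : x ∈ a1 <;> by_cases h2 : x ∈ a2 <;> by_cases h3 : x ∈ a3 <;>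
      by_cases h4 : x ∈ a4 <;> simp [h1, h2, h3, h4]
  have e24 : (d2 ∪ b) ∪ (d4 ∪ b) = a2 ∪ a4 ∪ a1 ∩ a3 := by
    ext x
    simp only [d1, d2, d3, d4, b, Finset.mem_union, Finset.mem_sdiff, Finset.mem_inter]
    by_cases h1 : x ∈ a1 <;> by_cases h2 : x ∈ a2 <;> by_cases h3 : x ∈ a3 <;>
      by_cases h4 : x ∈ a4 <;> simp [h1, h2, h3, h4]
  have e34 : (d3 ∪ b) ∪ (d4 ∪ b) = a3 ∪ a4 ∪ a1 ∩ a2 := by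
    ext x
    simp only [d1, d2, d3, d4, b, Finset.mem_union, Finset.mem_sdiff, Finset.mem_inter]
    by_cases h1 : x ∈ a1 <;> by_cases h2 : x ∈ a2 <;> by_cases h3 : x ∈ a3 <;>
      by_cases h4 : x ∈ a4 <;> simp [h1, h2, h3, h4]
  have es1 : d1 ∪ b = a1 ∪ a2 ∩ a3 ∪ a2 ∩ a4 ∪ a3 ∩ a4 := by
    ext x
    simp only [d1, d2, d3, d4, b, Finset.mem_union, Finset.mem_sdiff, Finset.mem_inter]
    by_cases h1 : x ∈ a1 <;> by_cases h2 : x ∈ a2 <;> by_cases h3 : x ∈ a3 <;>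
      by_cases h4 : x ∈ a4 <;> simp [h1, h2, h3, h4]
  have es2 : d2 ∪ b = a2 ∪ a1 ∩ a4 ∪ a1 ∩ a3 ∪ a3 ∩ a4 := by
    ext x
    simp only [d1, d2, d3, d4, b, Finset.mem_union, Finset.mem_sdiff, Finset.mem_inter]
    by_cases h1 : x ∈ a1 <;> by_cases h2 : x ∈ a2 <;> by_cases h3 : x ∈ a3 <;>
      by_cases h4 : x ∈ a4 <;> simp [h1, h2, h3, h4]
  have et3 : (d1 ∪ b) ∪ (d2 ∪ b) ∪ (d3 ∪ b) = a1 ∪ a2 ∪ a3 := by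
    ext x
    simp only [d1, d2, d3, d4, b, Finset.mem_union, Finset.mem_sdiff, Finset.mem_inter]
    by_cases h1 : x ∈ a1 <;> by_cases h2 : x ∈ a2 <;> by_cases h3 : x ∈ a3 <;>
      by_cases h4 : x ∈ a4 <;> simp [h1, h2, h3, h4]
  have et4 : (d1 ∪ b) ∪ (d2 ∪ b) ∪ (d4 ∪ b) = a1 ∪ a2 ∪ a4 := by
    ext x
    simp only [d1, d2, d3, d4, b, Finset.mem_union, Finset.mem_sdiff, Finset.mem_inter]
    by_cases h1 : x ∈ a1 <;> by_cases h2 : x ∈ a2 <;> by_cases h3 : x ∈ a3 <;>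
      by_cases h4 : x ∈ a4 <;> simp [h1, h2, h3, h4]
  -- chain for G1
  have i1 : h (a1 ∪ a4 ∪ a2 ∩ a3) + h a1 ≤ h (a1 ∪ a4) + h (a1 ∪ a2 ∩ a3) :=
    dimret h hmono hsub (a2 ∩ a3) Finset.subset_union_left
  have i2 : h (a1 ∪ a3 ∪ a2 ∩ a4) + h (a1 ∪ a2 ∩ a3)
      ≤ h (a1 ∪ a3) + h (a1 ∪ a2 ∩ a3 ∪ a2 ∩ a4) :=
    dimret h hmono hsub (a2 ∩ a4)
      (Finset.union_subset Finset.subset_union_left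
        ((Finset.inter_subset_right).trans Finset.subset_union_right))
  have i3 : h (a1 ∪ a2 ∪ a3 ∩ a4) + h (a1 ∪ a2 ∩ a3 ∪ a2 ∩ a4)
      ≤ h (a1 ∪ a2) + h (a1 ∪ a2 ∩ a3 ∪ a2 ∩ a4 ∪ a3 ∩ a4) :=
    dimret h hmono hsub (a3 ∩ a4)
      (Finset.union_subset
        (Finset.union_subset Finset.subset_union_left
          ((Finset.inter_subset_left).trans Finset.subset_union_right))
        ((Finset.inter_subset_left).trans Finset.subset_union_right))
  -- chain for G2
  have j1 : h (a2 ∪ a3 ∪ a1 ∩ a4) + h a2 ≤ h (a2 ∪ a3) + h (a2 ∪ a1 ∩ a4) :=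
    dimret h hmono hsub (a1 ∩ a4) Finset.subset_union_left
  have j2 : h (a2 ∪ a4 ∪ a1 ∩ a3) + h (a2 ∪ a1 ∩ a4)
      ≤ h (a2 ∪ a4) + h (a2 ∪ a1 ∩ a4 ∪ a1 ∩ a3) :=
    dimret h hmono hsub (a1 ∩ a3)
      (Finset.union_subset Finset.subset_union_left
        ((Finset.inter_subset_right).trans Finset.subset_union_right))
  have j3 : h (a2 ∪ a1 ∩ a4 ∪ a1 ∩ a3) ≤ h (a2 ∪ a1 ∩ a4 ∪ a1 ∩ a3 ∪ a3 ∩ a4) :=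
    hmono Finset.subset_union_left
  have g3 : h (a3 ∪ a4) ≤ h (a3 ∪ a4 ∪ a1 ∩ a2) :=
    hmono Finset.subset_union_left
  simp only [IngJ]
  rw [et3, et4, e12, e13, e14, e23, e24, e34, es1, es2]
  linarith
end

section
/- The set function h*(α) := 2^n (1 − 2^{−|α|}) on subsets of an n-element set N satisfies J(h*; α₁, α₂, α₃, α₄) > 0 for every choice of subsets α₁, α₂, α₃, α₄ of N for which the Ingleton term is not identically zero (i.e., for which there exists some set function g with J(g; α₁, α₂, α₃, α₄) ≠ 0). -/
lemma union_nonempty' {N : Type*} [DecidableEq N] (s t : Finset N) :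
    (s ∪ t).Nonempty ↔ s.Nonempty ∨ t.Nonempty := by
  simp [Finset.Nonempty, Finset.mem_union, exists_or]

noncomputable def Tind {N : Type*} [DecidableEq N] (S α : Finset N) : ℝ :=
  if (S ∩ α).Nonempty then 1 else 0

lemma Tind_nonneg {N : Type*} [DecidableEq N] (S a b c d : Finset N) :
    0 ≤ IngJ (Tind S) a b c d := by
  simp only [IngJ, Tind, Finset.inter_union_distrib_left, union_nonempty']
  by_cases h1 : (S ∩ a).Nonempty <;> by_cases h2 : (S ∩ b).Nonempty <;>
    by_cases h3 : (S ∩ c).Nonempty <;> by_cases h4 : (S ∩ d).Nonempty <;>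
    simp [h1, h2, h3, h4] <;> norm_num

lemma hstar_eq {N : Type*} [DecidableEq N] [Fintype N] (α : Finset N) :
    (2 : ℝ) ^ (Fintype.card N) * (1 - (2 : ℝ)⁻¹ ^ α.card)
      = ∑ S : Finset N, Tind S α := by
  have hk : α.card ≤ Fintype.card N := Finset.card_le_univ α
  have h1 : ∑ S : Finset N, Tind S α
      = ((Finset.univ.filter (fun S : Finset N => (S ∩ α).Nonempty)).card : ℝ) := by
    simp [Tind, Finset.sum_boole]
  have h2 : (Finset.univ.filter (fun S : Finset N => ¬(S ∩ α).Nonempty)) = αᶜ.powerset := by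
    ext S
    simp only [Finset.mem_filter, Finset.mem_univ, true_and, Finset.mem_powerset,
      Finset.not_nonempty_iff_eq_empty, Finset.eq_empty_iff_forall_notMem,
      Finset.subset_iff, Finset.mem_inter, Finset.mem_compl, not_and]
  have h3 : (Finset.univ.filter (fun S : Finset N => (S ∩ α).Nonempty)).card
      = 2 ^ Fintype.card N - 2 ^ (Fintype.card N - α.card) := by
    have hc := Finset.card_filter_add_card_filter_not
      (s := (Finset.univ : Finset (Finset N))) (p := fun S : Finset N => (S ∩ α).Nonempty)
    rw [h2] at hc
    have hu : (Finset.univ : Finset (Finset N)).card = 2 ^ Fintype.card N := by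
      simp [Finset.card_univ, Fintype.card_finset]
    rw [Finset.card_powerset, Finset.card_compl] at hc
    omega
  have hle : 2 ^ (Fintype.card N - α.card) ≤ 2 ^ Fintype.card N :=
    Nat.pow_le_pow_right (by norm_num) (by omega)
  rw [h1, h3]
  push_cast [hle]
  have hmul : (2:ℝ) ^ (Fintype.card N - α.card) * 2 ^ α.card = 2 ^ Fintype.card N := by
    rw [← pow_add]; congr 1; omega
  have h2k : (0:ℝ) < 2 ^ α.card := by positivity
  rw [inv_pow]
  field_simp
  nlinarith [hmul]

lemma ing_eq_zero {N : Type*} [DecidableEq N] (g : Finset N → ℝ) (a b c d : Finset N)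
    (h1 : a ⊆ c ∪ d ∨ b ⊆ c ∪ d) (h2 : c ⊆ a ∨ d ⊆ a) (h3 : c ⊆ b ∨ d ⊆ b) :
    IngJ g a b c d = 0 := by
  have mem : ∀ (s t : Finset N), s ⊆ t → ∀ x, x ∈ s → x ∈ t := fun s t hst x hx => hst hx
  rcases h1 with h1 | h1 <;> rcases h2 with h2 | h2 <;> rcases h3 with h3 | h3
  · -- a ⊆ c∪d, c ⊆ a, c ⊆ b
    have e1 : a ∪ c = a := Finset.union_eq_left.mpr h2
    have e2 : b ∪ c = b := Finset.union_eq_left.mpr h3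
    have e3 : a ∪ d = c ∪ d := Finset.ext fun x => by
      have p1 := mem _ _ h1 x; have p2 := mem _ _ h2 x
      simp only [Finset.mem_union] at *; tauto
    have e4 : a ∪ b ∪ c = a ∪ b := Finset.ext fun x => by
      have p2 := mem _ _ h2 x
      simp only [Finset.mem_union] at *; tauto
    have e5 : a ∪ b ∪ d = b ∪ d := Finset.ext fun x => by
      have p1 := mem _ _ h1 x; have p3 := mem _ _ h3 x
      simp only [Finset.mem_union] at *; tauto
    simp only [IngJ, e1, e2, e3, e4, e5]; ring
  · -- a ⊆ c∪d, c ⊆ a, d ⊆ b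
    have e1 : a ∪ c = a := Finset.union_eq_left.mpr h2
    have e2 : b ∪ d = b := Finset.union_eq_left.mpr h3
    have e3 : a ∪ d = c ∪ d := Finset.ext fun x => by
      have p1 := mem _ _ h1 x; have p2 := mem _ _ h2 x
      simp only [Finset.mem_union] at *; tauto
    have e4 : b ∪ c = a ∪ b := Finset.ext fun x => by
      have p1 := mem _ _ h1 x; have p2 := mem _ _ h2 x; have p3 := mem _ _ h3 x
      simp only [Finset.mem_union] at *; tauto
    have e5 : a ∪ b ∪ c = a ∪ b := Finset.ext fun x => by
      have p2 := mem _ _ h2 x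
      simp only [Finset.mem_union] at *; tauto
    have e6 : a ∪ b ∪ d = a ∪ b := Finset.ext fun x => by
      have p3 := mem _ _ h3 x
      simp only [Finset.mem_union] at *; tauto
    simp only [IngJ, e1, e2, e3, e4, e5, e6]; ring
  · -- a ⊆ c∪d, d ⊆ a, c ⊆ b
    have e1 : a ∪ d = a := Finset.union_eq_left.mpr h2
    have e2 : b ∪ c = b := Finset.union_eq_left.mpr h3
    have e3 : a ∪ c = c ∪ d := Finset.ext fun x => by
      have p1 := mem _ _ h1 x; have p2 := mem _ _ h2 x
      simp only [Finset.mem_union] at *; tauto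
    have e4 : b ∪ d = a ∪ b := Finset.ext fun x => by
      have p1 := mem _ _ h1 x; have p2 := mem _ _ h2 x; have p3 := mem _ _ h3 x
      simp only [Finset.mem_union] at *; tauto
    have e5 : a ∪ b ∪ c = a ∪ b := Finset.ext fun x => by
      have p3 := mem _ _ h3 x
      simp only [Finset.mem_union] at *; tauto
    have e6 : a ∪ b ∪ d = a ∪ b := Finset.ext fun x => by
      have p2 := mem _ _ h2 x
      simp only [Finset.mem_union] at *; tauto
    simp only [IngJ, e1, e2, e3, e4, e5, e6]; ring
  · -- a ⊆ c∪d, d ⊆ a, d ⊆ b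
    have e1 : a ∪ d = a := Finset.union_eq_left.mpr h2
    have e2 : b ∪ d = b := Finset.union_eq_left.mpr h3
    have e3 : a ∪ c = c ∪ d := Finset.ext fun x => by
      have p1 := mem _ _ h1 x; have p2 := mem _ _ h2 x
      simp only [Finset.mem_union] at *; tauto
    have e4 : a ∪ b ∪ c = b ∪ c := Finset.ext fun x => by
      have p1 := mem _ _ h1 x; have p3 := mem _ _ h3 x
      simp only [Finset.mem_union] at *; tauto
    have e5 : a ∪ b ∪ d = a ∪ b := Finset.ext fun x => by
      have p2 := mem _ _ h2 x
      simp only [Finset.mem_union] at *; tauto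
    simp only [IngJ, e1, e2, e3, e4, e5]; ring
  · -- b ⊆ c∪d, c ⊆ a, c ⊆ b
    have e1 : a ∪ c = a := Finset.union_eq_left.mpr h2
    have e2 : b ∪ c = b := Finset.union_eq_left.mpr h3
    have e3 : b ∪ d = c ∪ d := Finset.ext fun x => by
      have p1 := mem _ _ h1 x; have p3 := mem _ _ h3 x
      simp only [Finset.mem_union] at *; tauto
    have e4 : a ∪ b ∪ c = a ∪ b := Finset.ext fun x => by
      have p2 := mem _ _ h2 x
      simp only [Finset.mem_union] at *; tauto
    have e5 : a ∪ b ∪ d = a ∪ d := Finset.ext fun x => by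
      have p1 := mem _ _ h1 x; have p2 := mem _ _ h2 x
      simp only [Finset.mem_union] at *; tauto
    simp only [IngJ, e1, e2, e3, e4, e5]; ring
  · -- b ⊆ c∪d, c ⊆ a, d ⊆ b
    have e1 : a ∪ c = a := Finset.union_eq_left.mpr h2
    have e2 : b ∪ d = b := Finset.union_eq_left.mpr h3
    have e3 : b ∪ c = c ∪ d := Finset.ext fun x => by
      have p1 := mem _ _ h1 x; have p3 := mem _ _ h3 x
      simp only [Finset.mem_union] at *; tauto
    have e4 : a ∪ d = a ∪ b := Finset.ext fun x => by
      have p1 := mem _ _ h1 x; have p2 := mem _ _ h2 x; have p3 := mem _ _ h3 x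
      simp only [Finset.mem_union] at *; tauto
    have e5 : a ∪ b ∪ c = a ∪ b := Finset.ext fun x => by
      have p2 := mem _ _ h2 x
      simp only [Finset.mem_union] at *; tauto
    have e6 : a ∪ b ∪ d = a ∪ b := Finset.ext fun x => by
      have p3 := mem _ _ h3 x
      simp only [Finset.mem_union] at *; tauto
    simp only [IngJ, e1, e2, e3, e4, e5, e6]; ring
  · -- b ⊆ c∪d, d ⊆ a, c ⊆ b
    have e1 : a ∪ d = a := Finset.union_eq_left.mpr h2
    have e2 : b ∪ c = b := Finset.union_eq_left.mpr h3
    have e3 : b ∪ d = c ∪ d := Finset.ext fun x => by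
      have p1 := mem _ _ h1 x; have p3 := mem _ _ h3 x
      simp only [Finset.mem_union] at *; tauto
    have e4 : a ∪ c = a ∪ b := Finset.ext fun x => by
      have p1 := mem _ _ h1 x; have p2 := mem _ _ h2 x; have p3 := mem _ _ h3 x
      simp only [Finset.mem_union] at *; tauto
    have e5 : a ∪ b ∪ c = a ∪ b := Finset.ext fun x => by
      have p3 := mem _ _ h3 x
      simp only [Finset.mem_union] at *; tauto
    have e6 : a ∪ b ∪ d = a ∪ b := Finset.ext fun x => by
      have p2 := mem _ _ h2 x
      simp only [Finset.mem_union] at *; tauto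
    simp only [IngJ, e1, e2, e3, e4, e5, e6]; ring
  · -- b ⊆ c∪d, d ⊆ a, d ⊆ b
    have e1 : a ∪ d = a := Finset.union_eq_left.mpr h2
    have e2 : b ∪ d = b := Finset.union_eq_left.mpr h3
    have e3 : b ∪ c = c ∪ d := Finset.ext fun x => by
      have p1 := mem _ _ h1 x; have p3 := mem _ _ h3 x
      simp only [Finset.mem_union] at *; tauto
    have e4 : a ∪ b ∪ c = a ∪ c := Finset.ext fun x => by
      have p1 := mem _ _ h1 x; have p2 := mem _ _ h2 x
      simp only [Finset.mem_union] at *; tauto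
    have e5 : a ∪ b ∪ d = a ∪ b := Finset.ext fun x => by
      have p2 := mem _ _ h2 x
      simp only [Finset.mem_union] at *; tauto
    simp only [IngJ, e1, e2, e3, e4, e5]; ring

theorem ingleton_strict_pos_of_nontrivial {N : Type*} [DecidableEq N] [Fintype N]
    (a1 a2 a3 a4 : Finset N)
    (hnt : ∃ g : Finset N → ℝ, g ∅ = 0 ∧ IngJ g a1 a2 a3 a4 ≠ 0) :
    0 < IngJ (fun α => (2 : ℝ) ^ (Fintype.card N) * (1 - (2 : ℝ)⁻¹ ^ α.card)) a1 a2 a3 a4 := by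
  classical
  obtain ⟨g, hg0, hgne⟩ := hnt
  have hfun : (fun α : Finset N => (2 : ℝ) ^ (Fintype.card N) * (1 - (2 : ℝ)⁻¹ ^ α.card))
      = fun α => ∑ S : Finset N, Tind S α := funext fun α => hstar_eq α
  have hsum : IngJ (fun α : Finset N => ∑ S : Finset N, Tind S α) a1 a2 a3 a4
      = ∑ S : Finset N, IngJ (Tind S) a1 a2 a3 a4 := by
    simp only [IngJ, Finset.sum_add_distrib, Finset.sum_sub_distrib]
  rw [hfun, hsum]
  -- find a witness S₀ with strictly positive term
  have hwit : ∃ S₀ : Finset N, 0 < IngJ (Tind S₀) a1 a2 a3 a4 := by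
    by_cases hc1 : a1 ⊆ a3 ∪ a4 ∨ a2 ⊆ a3 ∪ a4
    · by_cases hc2 : a3 ⊆ a1 ∨ a4 ⊆ a1
      · by_cases hc3 : a3 ⊆ a2 ∨ a4 ⊆ a2
        · exact absurd (ing_eq_zero g a1 a2 a3 a4 hc1 hc2 hc3) hgne
        · push_neg at hc3
          obtain ⟨hn3, hn4⟩ := hc3
          obtain ⟨i, hi3, hi2⟩ := Finset.not_subset.mp hn3
          obtain ⟨j, hj4, hj2⟩ := Finset.not_subset.mp hn4
          refine ⟨{i, j}, ?_⟩
          have hb2 : ¬ (({i, j} : Finset N) ∩ a2).Nonempty := by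
            simp [Finset.Nonempty, Finset.mem_inter, Finset.mem_insert]
            tauto
          have hb3 : (({i, j} : Finset N) ∩ a3).Nonempty :=
            ⟨i, Finset.mem_inter.mpr ⟨by simp, hi3⟩⟩
          have hb4 : (({i, j} : Finset N) ∩ a4).Nonempty :=
            ⟨j, Finset.mem_inter.mpr ⟨by simp, hj4⟩⟩
          simp only [IngJ, Tind, Finset.inter_union_distrib_left, union_nonempty']
          by_cases hb1 : (({i, j} : Finset N) ∩ a1).Nonempty <;>
            simp [hb1, hb2, hb3, hb4] <;> norm_num
      · push_neg at hc2
        obtain ⟨hn3, hn4⟩ := hc2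
        obtain ⟨i, hi3, hi1⟩ := Finset.not_subset.mp hn3
        obtain ⟨j, hj4, hj1⟩ := Finset.not_subset.mp hn4
        refine ⟨{i, j}, ?_⟩
        have hb1 : ¬ (({i, j} : Finset N) ∩ a1).Nonempty := by
          simp [Finset.Nonempty, Finset.mem_inter, Finset.mem_insert]
          tauto
        have hb3 : (({i, j} : Finset N) ∩ a3).Nonempty :=
          ⟨i, Finset.mem_inter.mpr ⟨by simp, hi3⟩⟩
        have hb4 : (({i, j} : Finset N) ∩ a4).Nonempty :=
          ⟨j, Finset.mem_inter.mpr ⟨by simp, hj4⟩⟩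
        simp only [IngJ, Tind, Finset.inter_union_distrib_left, union_nonempty']
        by_cases hb2 : (({i, j} : Finset N) ∩ a2).Nonempty <;>
          simp [hb1, hb2, hb3, hb4] <;> norm_num
    · push_neg at hc1
      obtain ⟨hn1, hn2⟩ := hc1
      obtain ⟨i, hi1, hi34⟩ := Finset.not_subset.mp hn1
      obtain ⟨j, hj2, hj34⟩ := Finset.not_subset.mp hn2
      simp only [Finset.mem_union, not_or] at hi34 hj34
      refine ⟨{i, j}, ?_⟩
      have hb1 : (({i, j} : Finset N) ∩ a1).Nonempty :=
        ⟨i, Finset.mem_inter.mpr ⟨by simp, hi1⟩⟩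
      have hb2 : (({i, j} : Finset N) ∩ a2).Nonempty :=
        ⟨j, Finset.mem_inter.mpr ⟨by simp, hj2⟩⟩
      have hb3 : ¬ (({i, j} : Finset N) ∩ a3).Nonempty := by
        simp [Finset.Nonempty, Finset.mem_inter, Finset.mem_insert]
        tauto
      have hb4 : ¬ (({i, j} : Finset N) ∩ a4).Nonempty := by
        simp [Finset.Nonempty, Finset.mem_inter, Finset.mem_insert]
        tauto
      simp only [IngJ, Tind, Finset.inter_union_distrib_left, union_nonempty']
      simp [hb1, hb2, hb3, hb4]
  obtain ⟨S₀, hS₀⟩ := hwit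
  calc (0:ℝ) < IngJ (Tind S₀) a1 a2 a3 a4 := hS₀
    _ ≤ ∑ S : Finset N, IngJ (Tind S) a1 a2 a3 a4 :=
      Finset.single_le_sum (fun S _ => Tind_nonneg S a1 a2 a3 a4) (Finset.mem_univ S₀)
end

section
/- Let δ₁, δ₂, δ₃, δ₄, β be pairwise disjoint subsets of N. Then J(h; δ₁∪β, δ₂∪β, δ₃∪β, δ₄∪β) = 0 for all set functions h (with h(∅)=0) if and only if (δ₁ = ∅ or δ₂ = ∅) and (δ₃ = ∅ or δ₄ = ∅). -/
theorem ingleton_identically_zero_iff {N : Type*} [DecidableEq N] [Fintype N]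
    (d1 d2 d3 d4 b : Finset N)
    (h12 : Disjoint d1 d2) (h13 : Disjoint d1 d3) (h14 : Disjoint d1 d4)
    (h23 : Disjoint d2 d3) (h24 : Disjoint d2 d4) (h34 : Disjoint d3 d4)
    (h1b : Disjoint d1 b) (h2b : Disjoint d2 b) (h3b : Disjoint d3 b) (h4b : Disjoint d4 b) :
    (∀ h : Finset N → ℝ, h ∅ = 0 → IngJ h (d1 ∪ b) (d2 ∪ b) (d3 ∪ b) (d4 ∪ b) = 0) ↔
      ((d1 = ∅ ∨ d2 = ∅) ∧ (d3 = ∅ ∨ d4 = ∅)) := by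
  constructor
  · intro H
    by_contra hc
    rw [not_and_or] at hc
    rcases hc with hc | hc
    · rw [not_or] at hc
      obtain ⟨x, hx⟩ := Finset.nonempty_iff_ne_empty.mpr hc.1
      obtain ⟨y, hy⟩ := Finset.nonempty_iff_ne_empty.mpr hc.2
      have hx2 : x ∉ d2 := Finset.disjoint_left.mp h12 hx
      have hx3 : x ∉ d3 := Finset.disjoint_left.mp h13 hx
      have hx4 : x ∉ d4 := Finset.disjoint_left.mp h14 hx
      have hxb : x ∉ b := Finset.disjoint_left.mp h1b hx
      have hy1 : y ∉ d1 := Finset.disjoint_right.mp h12 hy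
      have hy3 : y ∉ d3 := Finset.disjoint_left.mp h23 hy
      have hy4 : y ∉ d4 := Finset.disjoint_left.mp h24 hy
      have hyb : y ∉ b := Finset.disjoint_left.mp h2b hy
      have := H (fun S => if x ∈ S ∧ y ∈ S then (1 : ℝ) else 0) (by simp)
      simp only [IngJ, Finset.mem_union] at this
      simp [hx, hy, hx2, hx3, hx4, hxb, hy1, hy3, hy4, hyb] at this
    · rw [not_or] at hc
      obtain ⟨x, hx⟩ := Finset.nonempty_iff_ne_empty.mpr hc.1
      obtain ⟨y, hy⟩ := Finset.nonempty_iff_ne_empty.mpr hc.2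
      have hx1 : x ∉ d1 := Finset.disjoint_right.mp h13 hx
      have hx2 : x ∉ d2 := Finset.disjoint_right.mp h23 hx
      have hx4 : x ∉ d4 := Finset.disjoint_left.mp h34 hx
      have hxb : x ∉ b := Finset.disjoint_left.mp h3b hx
      have hy1 : y ∉ d1 := Finset.disjoint_right.mp h14 hy
      have hy2 : y ∉ d2 := Finset.disjoint_right.mp h24 hy
      have hy3 : y ∉ d3 := Finset.disjoint_right.mp h34 hy
      have hyb : y ∉ b := Finset.disjoint_left.mp h4b hy
      have := H (fun S => if x ∈ S ∧ y ∈ S then (1 : ℝ) else 0) (by simp)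
      simp only [IngJ, Finset.mem_union] at this
      simp [hx, hy, hx1, hx2, hx4, hxb, hy1, hy2, hy3, hyb] at this
  · rintro ⟨h1 | h2, h3 | h4⟩ h h0 <;>
      [subst h1; subst h1; subst h2; subst h2] <;>
      [subst h3; subst h4; subst h3; subst h4] <;>
      simp only [IngJ, Finset.empty_union, Finset.union_self, Finset.union_empty,
        Finset.union_assoc, Finset.union_left_comm, Finset.union_comm] <;>
      ring
end

section
/- Suppose c_i ≥ 0 for all i in a finite index set I, and suppose that for all set functions h on subsets of N, ∑_{i∈I} c_i · J(h; α₁ⁱ, α₂ⁱ, α₃ⁱ, α₄ⁱ) = 0, where each quadruple (α₁ⁱ, α₂ⁱ, α₃ⁱ, α₄ⁱ) yields a nontrivial Ingleton term (not identically zero as a function of h). Then c_i = 0 for all i ∈ I. -/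
namespace IngletonAux

open Finset

variable {N : Type*} [DecidableEq N]

/-- indicator of "S meets α" -/
noncomputable def gS (S : Finset N) : Finset N → ℝ :=
  fun α => if (S ∩ α).Nonempty then 1 else 0

lemma sum_pow_neg_one (x : Finset N) :
    ∑ m ∈ x.powerset, (-1 : ℝ) ^ m.card = if x = ∅ then 1 else 0 := by
  have h := Finset.sum_powerset_neg_one_pow_card (x := x)
  have h2 : ((∑ m ∈ x.powerset, (-1 : ℤ) ^ m.card : ℤ) : ℝ)
      = ∑ m ∈ x.powerset, (-1 : ℝ) ^ m.card := by push_cast; rfl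
  rw [← h2, h]
  split <;> norm_num

lemma filter_subset_sum (α D : Finset N) (hD : D ⊆ α) :
    ∑ C ∈ α.powerset.filter (fun C => D ⊆ C), (-1 : ℝ) ^ C.card
      = if D = α then (-1 : ℝ) ^ α.card else 0 := by
  have key : ∑ C ∈ α.powerset.filter (fun C => D ⊆ C), (-1 : ℝ) ^ C.card
      = ∑ E ∈ (α \ D).powerset, (-1 : ℝ) ^ (D ∪ E).card := by
    refine Finset.sum_nbij' (fun C => C \ D) (fun E => D ∪ E) ?_ ?_ ?_ ?_ ?_
    · intro C hC
      simp only [mem_filter, mem_powerset] at hC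
      simp only [mem_powerset]
      exact sdiff_subset_sdiff hC.1 le_rfl
    · intro E hE
      simp only [mem_powerset] at hE
      simp only [mem_filter, mem_powerset]
      exact ⟨union_subset hD (hE.trans sdiff_subset), subset_union_left⟩
    · intro C hC
      simp only [mem_filter, mem_powerset] at hC
      exact Finset.union_sdiff_of_subset hC.2
    · intro E hE
      simp only [mem_powerset] at hE
      exact Finset.union_sdiff_cancel_left (disjoint_sdiff.mono_right hE)
    · intro C hC
      simp only [mem_filter, mem_powerset] at hC
      rw [Finset.union_sdiff_of_subset hC.2]
  rw [key]
  have hcard : ∀ E ∈ (α \ D).powerset, (-1 : ℝ) ^ (D ∪ E).card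
      = (-1 : ℝ) ^ D.card * (-1 : ℝ) ^ E.card := by
    intro E hE
    simp only [mem_powerset] at hE
    rw [card_union_of_disjoint (disjoint_sdiff.mono_right hE), pow_add]
  rw [Finset.sum_congr rfl hcard, ← Finset.mul_sum, sum_pow_neg_one]
  by_cases h : D = α
  · subst h
    simp
  · have hne : α \ D ≠ ∅ := fun hcon =>
      h (Finset.Subset.antisymm hD (Finset.sdiff_eq_empty_iff_subset.mp hcon))
    simp [h, hne]

lemma mobius (g : Finset N → ℝ) (α : Finset N) :
    ∑ C ∈ α.powerset, (-1 : ℝ) ^ C.card *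
      ∑ D ∈ C.powerset, (-1 : ℝ) ^ D.card * g D = g α := by
  have hswap : ∑ C ∈ α.powerset, ∑ D ∈ C.powerset,
        (-1 : ℝ) ^ C.card * ((-1 : ℝ) ^ D.card * g D)
      = ∑ D ∈ α.powerset, ∑ C ∈ α.powerset.filter (fun C => D ⊆ C),
          (-1 : ℝ) ^ C.card * ((-1 : ℝ) ^ D.card * g D) := by
    refine Finset.sum_comm' ?_
    intro C D
    simp only [mem_filter, mem_powerset]
    constructor
    · rintro ⟨h1, h2⟩; exact ⟨⟨h1, h2⟩, h2.trans h1⟩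
    · rintro ⟨⟨h1, h2⟩, _⟩; exact ⟨h1, h2⟩
  calc ∑ C ∈ α.powerset, (-1 : ℝ) ^ C.card * ∑ D ∈ C.powerset, (-1 : ℝ) ^ D.card * g D
      = ∑ C ∈ α.powerset, ∑ D ∈ C.powerset,
          (-1 : ℝ) ^ C.card * ((-1 : ℝ) ^ D.card * g D) := by
        simp [Finset.mul_sum]
    _ = ∑ D ∈ α.powerset, ∑ C ∈ α.powerset.filter (fun C => D ⊆ C),
          (-1 : ℝ) ^ C.card * ((-1 : ℝ) ^ D.card * g D) := hswap
    _ = ∑ D ∈ α.powerset, (∑ C ∈ α.powerset.filter (fun C => D ⊆ C),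
          (-1 : ℝ) ^ C.card) * ((-1 : ℝ) ^ D.card * g D) := by
        simp [Finset.sum_mul]
    _ = g α := by
        rw [Finset.sum_congr rfl (fun D hD => by
          rw [filter_subset_sum α D (Finset.mem_powerset.mp hD)])]
        rw [Finset.sum_eq_single α (fun D _ hne => by simp [hne])
          (fun h => absurd (Finset.mem_powerset_self α) h)]
        rw [if_pos rfl, ← mul_assoc, ← pow_add, Even.neg_one_pow ⟨α.card, rfl⟩, one_mul]

lemma IngJ_sum {ι' : Type*} (T : Finset ι') (f : ι' → Finset N → ℝ) (a b c d : Finset N) :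
    IngJ (fun α => ∑ t ∈ T, f t α) a b c d = ∑ t ∈ T, IngJ (f t) a b c d := by
  simp [IngJ, Finset.sum_add_distrib, Finset.sum_sub_distrib]

lemma IngJ_smul (r : ℝ) (f : Finset N → ℝ) (a b c d : Finset N) :
    IngJ (fun α => r * f α) a b c d = r * IngJ f a b c d := by
  simp only [IngJ]; ring

lemma IngJ_const (r : ℝ) (a b c d : Finset N) :
    IngJ (fun _ => r) a b c d = 0 := by
  simp only [IngJ]; ring

lemma IngJ_sub (f h : Finset N → ℝ) (a b c d : Finset N) :
    IngJ (fun α => f α - h α) a b c d = IngJ f a b c d - IngJ h a b c d := by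
  simp only [IngJ]; ring

/-- express the "C ⊆ α" indicator via the gS family -/
lemma vC_eq (C : Finset N) (α : Finset N) :
    (if C ⊆ α then (1 : ℝ) else 0)
      = (if C = ∅ then (1 : ℝ) else 0)
        - ∑ S ∈ C.powerset, (-1 : ℝ) ^ S.card * gS S α := by
  have hsplit : ∀ S : Finset N, gS S α = 1 - (if S ∩ α = ∅ then (1 : ℝ) else 0) := by
    intro S
    unfold gS
    by_cases h : (S ∩ α).Nonempty
    · simp [h, Finset.nonempty_iff_ne_empty.mp h]
    · simp [h, Finset.not_nonempty_iff_eq_empty.mp h]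
  have h1 : ∑ S ∈ C.powerset, (-1 : ℝ) ^ S.card * gS S α
      = ∑ S ∈ C.powerset, (-1 : ℝ) ^ S.card
        - ∑ S ∈ C.powerset, (-1 : ℝ) ^ S.card * (if S ∩ α = ∅ then (1 : ℝ) else 0) := by
    rw [← Finset.sum_sub_distrib]
    refine Finset.sum_congr rfl fun S _ => ?_
    rw [hsplit S]; ring
  have hfilter : C.powerset.filter (fun S => S ∩ α = ∅) = (C \ α).powerset := by
    ext S
    simp only [mem_filter, mem_powerset, Finset.subset_sdiff]
    rw [← Finset.disjoint_iff_inter_eq_empty]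
  have h2 : ∑ S ∈ C.powerset, (-1 : ℝ) ^ S.card * (if S ∩ α = ∅ then (1 : ℝ) else 0)
      = ∑ S ∈ (C \ α).powerset, (-1 : ℝ) ^ S.card := by
    rw [← hfilter, Finset.sum_filter]
    refine Finset.sum_congr rfl fun S _ => ?_
    split <;> simp
  rw [h1, h2, sum_pow_neg_one, sum_pow_neg_one]
  simp only [Finset.sdiff_eq_empty_iff_subset]
  ring

/-- If all the gS Ingleton terms vanish, the Ingleton functional is identically zero -/
lemma IngJ_zero_of_gS_zero [Fintype N] (a b c d : Finset N)
    (hS : ∀ S : Finset N, IngJ (gS S) a b c d = 0)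
    (g : Finset N → ℝ) : IngJ g a b c d = 0 := by
  have hrep : g = fun α => ∑ C ∈ (Finset.univ : Finset N).powerset,
      ((-1 : ℝ) ^ C.card * ∑ D ∈ C.powerset, (-1 : ℝ) ^ D.card * g D)
        * (if C ⊆ α then (1 : ℝ) else 0) := by
    funext α
    have hfil : (Finset.univ : Finset N).powerset.filter (fun C => C ⊆ α)
        = α.powerset := by
      ext C; simp
    have : ∑ C ∈ (Finset.univ : Finset N).powerset,
        ((-1 : ℝ) ^ C.card * ∑ D ∈ C.powerset, (-1 : ℝ) ^ D.card * g D)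
          * (if C ⊆ α then (1 : ℝ) else 0)
        = ∑ C ∈ α.powerset,
            (-1 : ℝ) ^ C.card * ∑ D ∈ C.powerset, (-1 : ℝ) ^ D.card * g D := by
      rw [← hfil, Finset.sum_filter]
      refine Finset.sum_congr rfl fun C _ => ?_
      split <;> simp
    rw [this, mobius g α]
  conv_lhs => rw [hrep]
  rw [IngJ_sum]
  refine Finset.sum_eq_zero fun C _ => ?_
  rw [IngJ_smul]
  have hv : (fun α => if C ⊆ α then (1 : ℝ) else 0)
      = fun α => (if C = ∅ then (1 : ℝ) else 0)
          - ∑ S ∈ C.powerset, (-1 : ℝ) ^ S.card * gS S α := funext (vC_eq C)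
  have hz : IngJ (fun α => ∑ S ∈ C.powerset, (-1 : ℝ) ^ S.card * gS S α) a b c d = 0 := by
    rw [IngJ_sum]
    exact Finset.sum_eq_zero fun S _ => by rw [IngJ_smul, hS, mul_zero]
  rw [hv, IngJ_sub, IngJ_const, hz]
  ring

lemma union_nonempty' (s t : Finset N) :
    (s ∪ t).Nonempty ↔ s.Nonempty ∨ t.Nonempty := by
  simp [Finset.Nonempty, Finset.mem_union, exists_or]

lemma IngJ_gS_nonneg (S a b c d : Finset N) : 0 ≤ IngJ (gS S) a b c d := by
  simp only [IngJ, gS, Finset.inter_union_distrib_left, union_nonempty']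
  by_cases h1 : (S ∩ a).Nonempty <;> by_cases h2 : (S ∩ b).Nonempty <;>
    by_cases h3 : (S ∩ c).Nonempty <;> by_cases h4 : (S ∩ d).Nonempty <;>
    simp [h1, h2, h3, h4]

end IngletonAux

theorem ingleton_nonneg_comb_zero {N : Type*} [DecidableEq N] [Fintype N]
    {ι : Type*} (I : Finset ι) (c : ι → ℝ)
    (A1 A2 A3 A4 : ι → Finset N)
    (hc : ∀ i ∈ I, 0 ≤ c i)
    (hnt : ∀ i ∈ I, ∃ g : Finset N → ℝ, g ∅ = 0 ∧ IngJ g (A1 i) (A2 i) (A3 i) (A4 i) ≠ 0)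
    (hzero : ∀ h : Finset N → ℝ, h ∅ = 0 →
      ∑ i ∈ I, c i * IngJ h (A1 i) (A2 i) (A3 i) (A4 i) = 0) :
    ∀ i ∈ I, c i = 0 := by
  classical
  open IngletonAux in
  intro i hi
  set hstar : Finset N → ℝ :=
    fun α => ∑ S ∈ (Finset.univ : Finset N).powerset, gS S α with hdef
  have hstar0 : hstar ∅ = 0 := by
    simp [hdef, gS]
  have hJ : ∀ j, IngJ hstar (A1 j) (A2 j) (A3 j) (A4 j)
      = ∑ S ∈ (Finset.univ : Finset N).powerset,
          IngJ (gS S) (A1 j) (A2 j) (A3 j) (A4 j) := fun j =>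
    IngJ_sum _ _ _ _ _ _
  have hJnn : ∀ j, 0 ≤ IngJ hstar (A1 j) (A2 j) (A3 j) (A4 j) := by
    intro j
    rw [hJ j]
    exact Finset.sum_nonneg fun S _ => IngJ_gS_nonneg S _ _ _ _
  have hsum := hzero hstar hstar0
  have hterm : ∀ j ∈ I, c j * IngJ hstar (A1 j) (A2 j) (A3 j) (A4 j) = 0 :=
    (Finset.sum_eq_zero_iff_of_nonneg
      (fun j hj => mul_nonneg (hc j hj) (hJnn j))).mp hsum
  obtain ⟨g, hg0, hgne⟩ := hnt i hi
  have hex : ∃ S : Finset N, IngJ (gS S) (A1 i) (A2 i) (A3 i) (A4 i) ≠ 0 := by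
    by_contra hall
    push_neg at hall
    exact hgne (IngJ_zero_of_gS_zero _ _ _ _ hall g)
  obtain ⟨S0, hS0⟩ := hex
  have hpos : 0 < IngJ hstar (A1 i) (A2 i) (A3 i) (A4 i) := by
    rw [hJ i]
    refine Finset.sum_pos' (fun S _ => IngJ_gS_nonneg S _ _ _ _)
      ⟨S0, Finset.mem_powerset.mpr (Finset.subset_univ _),
        lt_of_le_of_ne (IngJ_gS_nonneg S0 _ _ _ _) (Ne.symm hS0)⟩
  have h0 := hterm i hi
  rcases mul_eq_zero.mp h0 with h | h
  · exact h
  · exact absurd h (ne_of_gt hpos)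
end
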